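/- arXiv:2311.00127 — 3 statements merged into one kernel-verified Lean document; each statement's English description precedes it below -/
import Mathlib

section
/- Let R be a p-complete ring, (M, M₁) a pair over R: M a finite projective W(R)-module and M₁ ⊆ M a submodule with I_R·M ⊆ M₁ such that M₁/I_R M is a direct summand of M/I_R M. Define the dual pair (M^∨, M₁*), where M^∨ = Hom_{W(R)}(M, W(R)) and M₁* = {ω ∈ M^∨ : ω(M₁) ⊆ I_R}. Then under the canonical isomorphism M → M^∨∨, the double dual (M₁*)* is carried back to M₁, i.e. (M, M₁)^∨∨ ≅ (M, M₁). -/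
/-- For a submodule `M₁ ⊆ M` and an ideal `I`, the "dual" submodule
`M₁* = {ω ∈ M^∨ : ω(M₁) ⊆ I}` of the linear dual `M^∨`. -/
def pairDualSub {A : Type*} [CommRing A] {M : Type*} [AddCommGroup M] [Module A M]
    (I : Ideal A) (M₁ : Submodule A M) : Submodule A (Module.Dual A M) where
  carrier := {ω | ∀ m ∈ M₁, ω m ∈ I}
  add_mem' := by
    intro a b ha hb m hm
    simpa using I.add_mem (ha m hm) (hb m hm)
  zero_mem' := by
    intro m hm
    simpa using I.zero_mem
  smul_mem' := by
    intro c ω hω m hm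
    simpa [smul_eq_mul] using I.mul_mem_left c (hω m hm)

lemma mem_of_forall_dual_mem {A : Type*} [CommRing A] {M : Type*} [AddCommGroup M] [Module A M]
    [Module.Projective A M] (I : Ideal A) {m : M}
    (h : ∀ e : M →ₗ[A] A, e m ∈ I) : m ∈ I • (⊤ : Submodule A M) := by
  obtain ⟨s, hs⟩ := Module.projective_def.mp ‹Module.Projective A M›
  have hm : m = (s m).sum fun i a => a • id i := by
    conv_lhs => rw [← hs m, Finsupp.linearCombination_apply]
  rw [hm]
  refine Submodule.sum_mem _ fun i _ => Submodule.smul_mem_smul ?_ trivial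
  simpa using h ((Finsupp.lapply i).comp s)

lemma mem_pairDualSub {A : Type*} [CommRing A] {M : Type*} [AddCommGroup M] [Module A M]
    {I : Ideal A} {M₁ : Submodule A M} {ω : Module.Dual A M} :
    ω ∈ pairDualSub I M₁ ↔ ∀ m ∈ M₁, ω m ∈ I := Iff.rfl

/-- Let `R` be a `p`-complete ring and `(M, M₁)` a pair over `R`:
`M` a finite projective `W(R)`-module and `M₁ ⊆ M` a submodule with `I_R·M ⊆ M₁` such that
`M₁/I_R M` is a direct summand of `M/I_R M`.  Define the dual pair `(M^∨, M₁*)`, where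
`M^∨ = Hom_{W(R)}(M, W(R))` and `M₁* = {ω ∈ M^∨ : ω(M₁) ⊆ I_R}`.  Then under the canonical
map `M → M^∨∨` the double dual `(M₁*)*` is carried back to `M₁`. -/
theorem pair_double_dual
    (p : ℕ) [Fact p.Prime] (R : Type*) [CommRing R]
    (hcomplete : IsAdicComplete (Ideal.span {(p : R)}) R)
    (M : Type*) [AddCommGroup M] [Module (WittVector p R) M]
    [Module.Finite (WittVector p R) M] [Module.Projective (WittVector p R) M]
    (M₁ : Submodule (WittVector p R) M)
    (hIM : RingHom.ker (WittVector.constantCoeff : WittVector p R →+* R) •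
        (⊤ : Submodule (WittVector p R) M) ≤ M₁)
    (hsummand : ∃ C : Submodule (WittVector p R)
        (M ⧸ (RingHom.ker (WittVector.constantCoeff : WittVector p R →+* R) •
          (⊤ : Submodule (WittVector p R) M))),
        IsCompl (M₁.map (RingHom.ker (WittVector.constantCoeff : WittVector p R →+* R) •
          (⊤ : Submodule (WittVector p R) M)).mkQ) C) :
    Submodule.comap (Module.Dual.eval (WittVector p R) M)
      (pairDualSub (RingHom.ker (WittVector.constantCoeff : WittVector p R →+* R))
        (pairDualSub (RingHom.ker (WittVector.constantCoeff : WittVector p R →+* R)) M₁))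
      = M₁ := by
    classical
  set A := WittVector p R
  set I : Ideal A := RingHom.ker (WittVector.constantCoeff : WittVector p R →+* R) with hIdef
  set T : Submodule A M := I • (⊤ : Submodule A M) with hTdef
  obtain ⟨C, hC⟩ := hsummand
  set N : Submodule A (M ⧸ T) := M₁.map T.mkQ with hNdef
  have hTM₁ : T ≤ M₁ := hIM
  ext m
  simp only [Submodule.mem_comap]
  constructor
  · intro hm
    rw [mem_pairDualSub] at hm
    -- Step 1: every functional into A⧸I vanishing on M₁ vanishes at m
    have key : ∀ g : M →ₗ[A] (A ⧸ (I : Submodule A A)),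
        (∀ x ∈ M₁, g x = 0) → g m = 0 := by
      intro g hg
      obtain ⟨ω, hω⟩ := Module.projective_lifting_property
        (Submodule.mkQ (I : Submodule A A)) g (Submodule.mkQ_surjective _)
      have hωI : ω ∈ pairDualSub I M₁ := by
        intro x hx
        have h0 : (I : Submodule A A).mkQ (ω x) = 0 := by
          rw [← LinearMap.comp_apply, hω]; exact hg x hx
        rwa [Submodule.mkQ_apply, Submodule.Quotient.mk_eq_zero] at h0
      have h1 : Module.Dual.eval A M m ω ∈ I := hm ω hωI
      have h2 : ω m ∈ I := h1
      calc g m = (I : Submodule A A).mkQ (ω m) := by rw [← LinearMap.comp_apply, hω]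
        _ = 0 := by
          rw [Submodule.mkQ_apply, Submodule.Quotient.mk_eq_zero]; exact h2
    -- Step 2: projection onto C
    set π := C.linearProjOfIsCompl N hC.symm with hπdef
    obtain ⟨m', hm'⟩ := Submodule.mkQ_surjective T ((π (T.mkQ m) : M ⧸ T))
    have hm'T : m' ∈ T := by
      rw [hTdef]
      apply mem_of_forall_dual_mem
      intro e
      have hker : T ≤ LinearMap.ker ((Submodule.mkQ (I : Submodule A A)).comp e) := by
        rw [hTdef]
        refine Submodule.smul_le.2 fun a ha x _ => ?_
        simp only [LinearMap.mem_ker, LinearMap.comp_apply, map_smul, Submodule.mkQ_apply]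
        rw [← Submodule.Quotient.mk_smul, Submodule.Quotient.mk_eq_zero]
        simpa [smul_eq_mul] using I.mul_mem_right (e x) ha
      set ebar := T.liftQ ((Submodule.mkQ (I : Submodule A A)).comp e) hker with hebar
      have hvanish : ∀ x ∈ M₁, (ebar.comp ((C.subtype.comp π).comp T.mkQ)) x = 0 := by
        intro x hx
        have hqx : T.mkQ x ∈ N := Submodule.mem_map_of_mem hx
        rw [LinearMap.comp_apply, LinearMap.comp_apply, LinearMap.comp_apply]
        show ebar (C.subtype (C.projectionOnto N hC.symm (T.mkQ x))) = 0
        rw [Submodule.projectionOnto_apply_of_mem_right hC.symm hqx, map_zero, map_zero]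
      have hg := key (ebar.comp ((C.subtype.comp π).comp T.mkQ)) hvanish
      have h0 : ebar (T.mkQ m') = 0 := by
        have h1 := hg
        simp only [LinearMap.comp_apply, Submodule.coe_subtype] at h1
        rw [hm']; exact h1
      rw [hebar, Submodule.mkQ_apply, Submodule.liftQ_apply, LinearMap.comp_apply,
        Submodule.mkQ_apply, Submodule.Quotient.mk_eq_zero] at h0
      exact h0
    have hπ0 : (π (T.mkQ m) : M ⧸ T) = 0 := by
      rw [← hm', Submodule.mkQ_apply, Submodule.Quotient.mk_eq_zero]
      exact hm'T
    have hmem : T.mkQ m ∈ N := by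
      have hsum : (N.projectionOnto C hC (T.mkQ m) : M ⧸ T) +
          (C.linearProjOfIsCompl N hC.symm (T.mkQ m) : M ⧸ T) = T.mkQ m :=
        Submodule.projection_add_projection_eq_self hC (T.mkQ m)
      rw [← hπdef] at hsum
      rw [hπ0, add_zero] at hsum
      rw [← hsum]
      exact (N.linearProjOfIsCompl C hC (T.mkQ m)).2
    obtain ⟨x, hx, hxm⟩ := hmem
    have hsub : m - x ∈ T := (Submodule.Quotient.eq T).mp
      (by rw [← Submodule.mkQ_apply, ← Submodule.mkQ_apply]; exact hxm.symm)
    have : m - x ∈ M₁ := hTM₁ hsub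
    simpa using M₁.add_mem hx this
  · intro hm ω hω
    exact hω m hm
end

section
/- Let R be a p-complete local ring (with residue characteristic p) and let (M, M₁) be a pair over R with M free of rank h over W(R). Then (M, M₁) admits a normal decomposition: there exist free W(R)-submodules L, T ⊆ M with M = L ⊕ T and M₁ = L ⊕ I_R·T. -/
noncomputable section

namespace WittNormalDecomp

open Finset MvPolynomial WittVector

variable (p : ℕ) [hp : Fact p.Prime]
variable {k : Type*} [CommRing k]

local notation "𝕎" => WittVector p

theorem nth_mul_coeff'_gen (k : Type*) [CommRing k] (n : ℕ) :
    ∃ f : TruncatedWittVector p (n + 1) k → TruncatedWittVector p (n + 1) k → k,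
    ∀ x y : 𝕎 k, f (truncateFun (n + 1) x) (truncateFun (n + 1) y) =
      (x * y).coeff (n + 1) + p ^ (n + 1) * x.coeff (n + 1) * y.coeff (n + 1) -
        y.coeff (n + 1) * ∑ i ∈ range (n + 1 + 1), p ^ i * x.coeff i ^ p ^ (n + 1 - i) -
        x.coeff (n + 1) * ∑ i ∈ range (n + 1 + 1), p ^ i * y.coeff i ^ p ^ (n + 1 - i) := by
  simp only [← peval_polyOfInterest]
  obtain ⟨f₀, hf₀⟩ := exists_restrict_to_vars (s := SetLike.coe (univ ×ˢ range (n + 1))) k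
    (polyOfInterest_vars p n)
  have : ∀ (a : Multiset (Fin 2)) (b : Multiset ℕ), a ×ˢ b = a.product b := fun a b => rfl
  let f : TruncatedWittVector p (n + 1) k → TruncatedWittVector p (n + 1) k → k := by
    intro x y
    apply f₀
    rintro ⟨a, ha⟩
    apply Function.uncurry ![x, y]
    let S : Set (Fin 2 × ℕ) := (fun a => a.2 = n ∨ a.2 < n)
    have ha' : a ∈ S := by
      simp only [Finset.mem_coe, Finset.mem_product, Finset.mem_range] at ha
      show a.2 = n ∨ a.2 < n
      omega
    refine ⟨a.fst, ⟨a.snd, ?_⟩⟩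
    cases' ha' with ha ha <;> omega
  use f
  intro x y
  dsimp [f, peval]
  rw [← hf₀]
  congr
  ext a
  cases' a with a ha
  cases' a with i m
  fin_cases i <;> rfl

theorem nth_mul_coeff_gen (k : Type*) [CommRing k] (n : ℕ) :
    ∃ f : TruncatedWittVector p (n + 1) k → TruncatedWittVector p (n + 1) k → k,
    ∀ x y : 𝕎 k, (x * y).coeff (n + 1) =
      y.coeff (n + 1) * ∑ i ∈ range (n + 2), p ^ i * x.coeff i ^ p ^ (n + 1 - i) +
      x.coeff (n + 1) * ∑ i ∈ range (n + 2), p ^ i * y.coeff i ^ p ^ (n + 1 - i) -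
      p ^ (n + 1) * x.coeff (n + 1) * y.coeff (n + 1) +
      f (truncateFun (n + 1) x) (truncateFun (n + 1) y) := by
  obtain ⟨f, hf⟩ := nth_mul_coeff'_gen p k n
  use f
  intro x y
  rw [hf x y]
  ring

/-- remainder function (general commutative ring version). -/
def nthRem (n : ℕ) : (Fin (n + 1) → k) → (Fin (n + 1) → k) → k :=
  Classical.choose (nth_mul_coeff_gen p k n)

theorem nthRem_spec (n : ℕ) (x y : 𝕎 k) :
    (x * y).coeff (n + 1) =
      y.coeff (n + 1) * ∑ i ∈ range (n + 2), p ^ i * x.coeff i ^ p ^ (n + 1 - i) +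
      x.coeff (n + 1) * ∑ i ∈ range (n + 2), p ^ i * y.coeff i ^ p ^ (n + 1 - i) -
      p ^ (n + 1) * x.coeff (n + 1) * y.coeff (n + 1) +
      nthRem p n (truncateFun (n + 1) x) (truncateFun (n + 1) y) :=
  Classical.choose_spec (nth_mul_coeff_gen p k n) _ _

/-- leading coefficient when solving for the (n+1)st inverse coefficient -/
def sA (A : 𝕎 k) (n : ℕ) : k := ∑ i ∈ range (n + 2), p ^ i * A.coeff i ^ p ^ (n + 1 - i)

variable {R : Type*} [CommRing R] [IsLocalRing R]

theorem isUnit_sA (hpR : (p : R) ∈ IsLocalRing.maximalIdeal R)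
    (A : 𝕎 R) (hA : IsUnit (A.coeff 0)) (n : ℕ) : IsUnit (sA p A n) := by
  have hsplit : sA p A n =
      (∑ i ∈ range (n + 1), p ^ (i + 1) * A.coeff (i + 1) ^ p ^ (n + 1 - (i + 1))) +
        p ^ 0 * A.coeff 0 ^ p ^ (n + 1 - 0) := Finset.sum_range_succ' _ (n + 1)
  have hmem : (∑ i ∈ range (n + 1), p ^ (i + 1) * A.coeff (i + 1) ^ p ^ (n + 1 - (i + 1)))
      ∈ IsLocalRing.maximalIdeal R := by
    refine Submodule.sum_mem _ fun i _ => ?_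
    exact Ideal.mul_mem_right _ _ (Ideal.pow_mem_of_mem _ hpR _ (Nat.succ_pos i))
  by_contra hcon
  have h1 : sA p A n ∈ IsLocalRing.maximalIdeal R := hcon
  have h2 : p ^ 0 * A.coeff 0 ^ p ^ (n + 1 - 0) ∈ IsLocalRing.maximalIdeal R := by
    have := Submodule.sub_mem _ h1 hmem
    rwa [hsplit, add_sub_cancel_left] at this
  simp only [pow_zero, one_mul] at h2
  exact h2 (hA.pow _)

/-- the (n+1)st coefficient of the inverse, given the earlier ones -/
def succVal (n : ℕ) (A : 𝕎 R) (bs : Fin (n + 1) → R) : R :=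
  -Ring.inverse (sA p A n) *
    (A.coeff (n + 1) * ∑ i : Fin (n + 1), (p : R) ^ (i : ℕ) * bs i ^ p ^ (n + 1 - (i : ℕ)) +
      nthRem p n (truncateFun (n + 1) A) bs)

/-- coefficients of the inverse Witt vector -/
def invCoeff (A : 𝕎 R) : ℕ → R
  | 0 => Ring.inverse (A.coeff 0)
  | n + 1 => succVal p n A fun i : Fin (n + 1) => invCoeff A i

theorem mul_invCoeff (hpR : (p : R) ∈ IsLocalRing.maximalIdeal R)
    (A : 𝕎 R) (hA : IsUnit (A.coeff 0)) :
    A * WittVector.mk p (invCoeff p A) = 1 := by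
  set B := WittVector.mk p (invCoeff p A) with hB
  have hBcoeff : ∀ m, B.coeff m = invCoeff p A m := fun m => rfl
  ext n
  cases n with
  | zero =>
      rw [mul_coeff_zero, hBcoeff, invCoeff, Ring.mul_inverse_cancel _ hA,
        WittVector.one_coeff_zero]
  | succ n =>
      have hrem := nthRem_spec p n A B
      have htrunc : truncateFun (n + 1) B = fun i : Fin (n + 1) => invCoeff p A i := by
        funext i
        exact coeff_truncateFun B i
      have hsy : ∑ i ∈ range (n + 2), (p : R) ^ i * B.coeff i ^ p ^ (n + 1 - i) =
          (∑ i ∈ range (n + 1), (p : R) ^ i * B.coeff i ^ p ^ (n + 1 - i)) +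
            p ^ (n + 1) * B.coeff (n + 1) := by
        rw [Finset.sum_range_succ, Nat.sub_self, pow_zero, pow_one]
      have hBsucc : B.coeff (n + 1) =
          -Ring.inverse (sA p A n) *
            (A.coeff (n + 1) * ∑ i ∈ range (n + 1),
                (p : R) ^ i * B.coeff i ^ p ^ (n + 1 - i) +
              nthRem p n (truncateFun (n + 1) A) (truncateFun (n + 1) B)) := by
        rw [hBcoeff, invCoeff, succVal, htrunc, Finset.sum_range fun i =>
          (p : R) ^ i * B.coeff i ^ p ^ (n + 1 - i)]
        rfl
      have hcancel : Ring.inverse (sA p A n) * sA p A n = 1 :=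
        Ring.inverse_mul_cancel _ (isUnit_sA p hpR A hA n)
      have hone : (1 : 𝕎 R).coeff (n + 1) = 0 := by
        simpa using one_coeff_eq_of_pos (R := R) (p := p) (n + 1) (Nat.succ_pos n)
      rw [hone, hrem, hsy]
      rw [show (∑ i ∈ range (n + 2), (p:R) ^ i * A.coeff i ^ p ^ (n + 1 - i)) = sA p A n from rfl]
      rw [hBsucc]
      linear_combination (-(A.coeff (n + 1) * ∑ i ∈ range (n + 1),
          (p : R) ^ i * B.coeff i ^ p ^ (n + 1 - i)) -
        nthRem p n (truncateFun (n + 1) A) (truncateFun (n + 1) B)) * hcancel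

theorem isUnit_of_isUnit_coeff (hpR : (p : R) ∈ IsLocalRing.maximalIdeal R)
    (A : 𝕎 R) (hA : IsUnit (A.coeff 0)) : IsUnit A :=
  IsUnit.of_mul_eq_one _ (mul_invCoeff p hpR A hA)

theorem isLocalRing_wittVector (hpR : (p : R) ∈ IsLocalRing.maximalIdeal R) :
    IsLocalRing (𝕎 R) := by
  refine IsLocalRing.of_isUnit_or_isUnit_one_sub_self fun a => ?_
  rcases IsLocalRing.isUnit_or_isUnit_one_sub_self (a.coeff 0) with h | h
  · exact Or.inl (isUnit_of_isUnit_coeff p hpR a h)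
  · refine Or.inr (isUnit_of_isUnit_coeff p hpR _ ?_)
    have : (1 - a).coeff 0 = 1 - a.coeff 0 := by
      have := (WittVector.constantCoeff : 𝕎 R →+* R).map_sub 1 a
      simpa [WittVector.constantCoeff_apply] using this
    rwa [this]


open Submodule Set TensorProduct in
theorem normal_decomp_aux (W : Type*) [CommRing W] [IsLocalRing W]
    (I : Ideal W) (hIm : I ≤ IsLocalRing.maximalIdeal W)
    (M : Type*) [AddCommGroup M] [Module W M] [Module.Free W M] [Module.Finite W M]
    (M₁ : Submodule W M) (N : Submodule W M) (hNI : N = I • (⊤ : Submodule W M))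
    (hIM : N ≤ M₁)
    (C : Submodule W (M ⧸ N))
    (hC : IsCompl (M₁.map N.mkQ) C) :
    ∃ L T : Submodule W M, IsCompl L T ∧ Module.Free W L ∧ Module.Free W T ∧
      M₁ = L ⊔ I • T := by
  classical
  set K := IsLocalRing.ResidueField W with hK
  set m : Ideal W := IsLocalRing.maximalIdeal W with hm
  letI : Module K (M ⧸ (m • ⊤ : Submodule W M)) :=
    (inferInstance : Module (W ⧸ m) (M ⧸ m • (⊤ : Submodule W M)))
  letI : IsScalarTower W K (M ⧸ (m • ⊤ : Submodule W M)) :=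
    (inferInstance : IsScalarTower W (W ⧸ m) (M ⧸ m • (⊤ : Submodule W M)))
  set ρ := (m • ⊤ : Submodule W M).mkQ with hρdef
  have hsurj : Function.Surjective (algebraMap W K) := Ideal.Quotient.mk_surjective
  have hNm : N ≤ (m • ⊤ : Submodule W M) := by
    rw [hNI]; exact Submodule.smul_mono hIm le_rfl
  set C' : Submodule W M := C.comap N.mkQ with hC'def
  have hpiC' : ∀ u ∈ C', N.mkQ u ∈ C := fun u hu => hu
  have hM₁C' : M₁ ⊔ C' = ⊤ := by
    rw [eq_top_iff]
    intro u _
    have hu : N.mkQ u ∈ M₁.map N.mkQ ⊔ C := by rw [hC.codisjoint.eq_top]; trivial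
    obtain ⟨q₁, hq₁, q₂, hq₂, hq⟩ := Submodule.mem_sup.1 hu
    obtain ⟨m₁, hm₁, hm₁eq⟩ := hq₁
    refine Submodule.mem_sup.2 ⟨m₁, hm₁, u - m₁, ?_, by abel⟩
    have : N.mkQ (u - m₁) = q₂ := by rw [map_sub, hm₁eq, ← hq]; abel
    show N.mkQ (u - m₁) ∈ C
    rw [this]; exact hq₂
  -- the two K-subspaces of V := M ⧸ m • ⊤
  set V₁ : Submodule K (M ⧸ (m • ⊤ : Submodule W M)) :=
    Submodule.span K (ρ '' M₁) with hV₁def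
  set V₂ : Submodule K (M ⧸ (m • ⊤ : Submodule W M)) :=
    Submodule.span K (ρ '' C') with hV₂def
  have hres : ∀ s : Submodule W M,
      (Submodule.span K (ρ '' s)).restrictScalars W = s.map ρ := by
    intro s
    rw [Submodule.restrictScalars_span W K hsurj, ← Submodule.map_span, Submodule.span_eq]
  have hV₁₂ : V₁ ⊔ V₂ = ⊤ := by
    rw [eq_top_iff]
    intro v _
    obtain ⟨u, rfl⟩ := (m • ⊤ : Submodule W M).mkQ_surjective v
    have : u ∈ M₁ ⊔ C' := by rw [hM₁C']; trivial
    obtain ⟨a, ha, b, hb, hab⟩ := Submodule.mem_sup.1 this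
    rw [← hρdef, ← hab, map_add]
    exact Submodule.add_mem _
      (Submodule.mem_sup_left (Submodule.subset_span ⟨a, ha, rfl⟩))
      (Submodule.mem_sup_right (Submodule.subset_span ⟨b, hb, rfl⟩))
  have hV₁V₂ : Disjoint V₁ V₂ := by
    rw [Submodule.disjoint_def]
    intro v hv₁ hv₂
    have hv₁' : v ∈ M₁.map ρ := by rw [← hres M₁]; exact hv₁
    have hv₂' : v ∈ C'.map ρ := by rw [← hres C']; exact hv₂
    obtain ⟨m₁, hm₁, rfl⟩ := hv₁'
    obtain ⟨c, hcC', hceq⟩ := hv₂'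
    have hsub : m₁ - c ∈ (m • ⊤ : Submodule W M) := by
      rw [← Submodule.Quotient.eq (m • ⊤ : Submodule W M)]
      exact hceq.symm
    have hpi' : N.mkQ m₁ - N.mkQ c ∈ m • (⊤ : Submodule W (M ⧸ N)) := by
      have h1 : N.mkQ (m₁ - c) ∈ ((m • ⊤ : Submodule W M)).map N.mkQ :=
        Submodule.mem_map_of_mem hsub
      rw [Submodule.map_smul'', Submodule.map_top, Submodule.range_mkQ] at h1
      rw [← map_sub]
      exact h1
    rw [show (⊤ : Submodule W (M ⧸ N)) = M₁.map N.mkQ ⊔ C from hC.codisjoint.eq_top.symm,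
      Submodule.smul_sup] at hpi'
    obtain ⟨a, ha, b, hb, hab⟩ := Submodule.mem_sup.1 hpi'
    have h2 : N.mkQ m₁ - a ∈ M₁.map N.mkQ :=
      Submodule.sub_mem _ (Submodule.mem_map_of_mem hm₁) (Submodule.smul_le_right ha)
    have h3 : N.mkQ m₁ - a ∈ C := by
      have heq3 : N.mkQ m₁ - a = N.mkQ c + b := by
        have h0 : N.mkQ m₁ = a + b + N.mkQ c := by rw [hab]; abel
        rw [h0]; abel
      rw [heq3]
      exact Submodule.add_mem _ (hpiC' c hcC') (Submodule.smul_le_right hb)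
    have h4 : N.mkQ m₁ = a := by
      have h0 := Submodule.disjoint_def.1 hC.disjoint _ h2 h3
      have : N.mkQ m₁ - a = 0 := h0
      linear_combination (norm := abel) this
    have h5 : N.mkQ m₁ ∈ (m • M₁).map N.mkQ := by
      rw [Submodule.map_smul'']
      rw [h4]; exact ha
    obtain ⟨nn, hnn, hnneq⟩ := h5
    have h6 : m₁ - nn ∈ N := by
      rw [← (Submodule.Quotient.eq N)]
      exact hnneq.symm
    have h7 : m₁ ∈ (m • ⊤ : Submodule W M) := by
      have := Submodule.add_mem _ (hNm h6) ((Submodule.smul_mono le_rfl le_top) hnn)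
      simpa using this
    exact (Submodule.Quotient.mk_eq_zero _).2 h7
  -- finiteness over the residue field
  haveI : Module.Finite K (M ⧸ (m • ⊤ : Submodule W M)) :=
    Module.Finite.of_restrictScalars_finite W K _
  -- bases of V₁ and V₂
  let b₁ : Module.Basis (Fin (Module.finrank K V₁)) K V₁ := Module.finBasis K V₁
  let b₂ : Module.Basis (Fin (Module.finrank K V₂)) K V₂ := Module.finBasis K V₂
  set ι := Fin (Module.finrank K V₁) ⊕ Fin (Module.finrank K V₂) with hι
  let zV : ι → (M ⧸ (m • ⊤ : Submodule W M)) :=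
    Sum.elim (V₁.subtype ∘ b₁) (V₂.subtype ∘ b₂)
  have hspan₁ : Submodule.span K (Set.range (V₁.subtype ∘ b₁)) = V₁ := by
    rw [Set.range_comp, ← Submodule.map_span, b₁.span_eq, Submodule.map_top,
      Submodule.range_subtype]
  have hspan₂ : Submodule.span K (Set.range (V₂.subtype ∘ b₂)) = V₂ := by
    rw [Set.range_comp, ← Submodule.map_span, b₂.span_eq, Submodule.map_top,
      Submodule.range_subtype]
  have hzV_li : LinearIndependent K zV :=
    LinearIndependent.sum_type
      (b₁.linearIndependent.map' V₁.subtype (Submodule.ker_subtype V₁))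
      (b₂.linearIndependent.map' V₂.subtype (Submodule.ker_subtype V₂))
      (by rw [hspan₁, hspan₂]; exact hV₁V₂)
  -- lift the bases to M
  have hx : ∀ i, ∃ u, u ∈ M₁ ∧ ρ u = (b₁ i : M ⧸ (m • ⊤ : Submodule W M)) := by
    intro i
    have : (b₁ i : M ⧸ (m • ⊤ : Submodule W M)) ∈ M₁.map ρ := by
      rw [← hres M₁]; exact (b₁ i).2
    obtain ⟨u, hu, he⟩ := this
    exact ⟨u, hu, he⟩
  have hy : ∀ j, ∃ u, u ∈ C' ∧ ρ u = (b₂ j : M ⧸ (m • ⊤ : Submodule W M)) := by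
    intro j
    have : (b₂ j : M ⧸ (m • ⊤ : Submodule W M)) ∈ C'.map ρ := by
      rw [← hres C']; exact (b₂ j).2
    obtain ⟨u, hu, he⟩ := this
    exact ⟨u, hu, he⟩
  choose x hxM₁ hxρ using hx
  choose y hyC' hyρ using hy
  set z : ι → M := Sum.elim x y with hz
  have hρz : ∀ i, ρ (z i) = zV i := by
    rintro (i | j)
    · simpa [z, zV] using hxρ i
    · simpa [z, zV] using hyρ j
  -- z spans M, by Nakayama
  have hKspan : Submodule.span K (Set.range zV) = ⊤ := by
    rw [Set.Sum.elim_range, Submodule.span_union, hspan₁, hspan₂, hV₁₂]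
  have hspan_top : Submodule.span W (Set.range z) = ⊤ := by
    rw [← IsLocalRing.map_mkQ_eq_top]
    rw [← hρdef, Submodule.map_span, ← Set.range_comp,
      show (⇑ρ ∘ z) = zV from funext hρz,
      ← Submodule.restrictScalars_span W K hsurj, hKspan]
    rfl
  -- z is linearly independent: by the split injectivity criterion
  let f : (ι →₀ W) →ₗ[W] M := Finsupp.linearCombination W z
  let wι : ι → K ⊗[W] M := fun i => (1 : K) ⊗ₜ[W] z i
  let ψ : K ⊗[W] M →ₗ[K] (M ⧸ (m • ⊤ : Submodule W M)) := LinearMap.liftBaseChange K ρ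
  have hψ : (⇑ψ ∘ wι) = zV := by
    funext i
    simp only [Function.comp_apply, wι, ψ, LinearMap.liftBaseChange_tmul, one_smul]
    exact hρz i
  have hwι_li : LinearIndependent K wι := by
    apply LinearIndependent.of_comp ψ
    rw [hψ]
    exact hzV_li
  let BF : Module.Basis ι K (K ⊗[W] (ι →₀ W)) :=
    Algebra.TensorProduct.basis K (Finsupp.basisSingleOne (R := W) (ι := ι))
  have hbc : ∀ i, f.baseChange K (BF i) = wι i := by
    intro i
    simp only [BF, Algebra.TensorProduct.basis_apply, LinearMap.baseChange_tmul]
    simp [f, wι, Finsupp.linearCombination_single]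
  have hg : Function.Injective (f.baseChange K) := by
    have heq : (f.baseChange K) =
        (Finsupp.linearCombination K wι).comp (BF.repr : _ →ₗ[K] (ι →₀ K)) := by
      apply BF.ext
      intro i
      simp [hbc i, Finsupp.linearCombination_single]
    rw [heq, LinearMap.coe_comp]
    have h1 : Function.Injective (Finsupp.linearCombination K wι) := hwι_li
    exact h1.comp (LinearEquiv.injective _)
  have hinj : Function.Injective f := by
    obtain ⟨l', hl'⟩ := (IsLocalRing.split_injective_iff_lTensor_residueField_injective f).2
      (by rw [← LinearMap.baseChange_eq_ltensor]; exact hg)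
    exact Function.HasLeftInverse.injective
      ⟨l', fun u => by simpa using LinearMap.congr_fun hl' u⟩
  have li_z : LinearIndependent W z := hinj
  -- define L and T
  set L : Submodule W M := Submodule.span W (Set.range x) with hLdef
  set T : Submodule W M := Submodule.span W (Set.range y) with hTdef
  have hLT_top : L ⊔ T = ⊤ := by
    rw [hLdef, hTdef, ← Submodule.span_union, ← Set.Sum.elim_range, ← hz, hspan_top]
  have hLT_disj : Disjoint L T := by
    have hst : Disjoint (Set.range (Sum.inl : _ → ι)) (Set.range (Sum.inr : _ → ι)) := by
      rw [Set.disjoint_left]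
      rintro _ ⟨i, rfl⟩ ⟨j, hj⟩
      exact Sum.inl_ne_inr hj.symm
    have hd := li_z.disjoint_span_image hst
    rw [show z '' Set.range Sum.inl = Set.range x by
        rw [← Set.range_comp]; rfl,
      show z '' Set.range Sum.inr = Set.range y by
        rw [← Set.range_comp]; rfl] at hd
    exact hd
  have hcompl : IsCompl L T := ⟨hLT_disj, codisjoint_iff.2 hLT_top⟩
  have li_x : LinearIndependent W x := li_z.comp Sum.inl Sum.inl_injective
  have li_y : LinearIndependent W y := li_z.comp Sum.inr Sum.inr_injective
  refine ⟨L, T, hcompl, Module.Free.of_basis (Module.Basis.span li_x),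
    Module.Free.of_basis (Module.Basis.span li_y), ?_⟩
  -- the final identity M₁ = L ⊔ I • T
  have hLM₁ : L ≤ M₁ := by
    rw [hLdef, Submodule.span_le]
    rintro _ ⟨i, rfl⟩
    exact hxM₁ i
  have hTC' : T ≤ C' := by
    rw [hTdef, Submodule.span_le]
    rintro _ ⟨j, rfl⟩
    exact hyC' j
  apply le_antisymm
  · intro u hu
    have hu' : u ∈ L ⊔ T := by rw [hLT_top]; trivial
    obtain ⟨l, hl, t, ht, hlt⟩ := Submodule.mem_sup.1 hu'
    have htM₁ : t ∈ M₁ := by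
      have : t = u - l := by rw [← hlt]; abel
      rw [this]
      exact Submodule.sub_mem _ hu (hLM₁ hl)
    have hpit0 : N.mkQ t = 0 := by
      have h1 : N.mkQ t ∈ M₁.map N.mkQ := Submodule.mem_map_of_mem htM₁
      have h2 : N.mkQ t ∈ C := hpiC' t (hTC' ht)
      exact Submodule.disjoint_def.1 hC.disjoint _ h1 h2
    have htN : t ∈ N := by
      rwa [Submodule.mkQ_apply, Submodule.Quotient.mk_eq_zero] at hpit0
    have htIT : t ∈ I • T := by
      have : t ∈ I • L ⊔ I • T := by
        rw [← Submodule.smul_sup, hLT_top, ← hNI]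
        exact htN
      obtain ⟨a, ha, b, hb, hab⟩ := Submodule.mem_sup.1 this
      have haT : a ∈ T := by
        have : a = t - b := by rw [← hab]; abel
        rw [this]
        exact Submodule.sub_mem _ ht (Submodule.smul_le_right hb)
      have haL : a ∈ L := Submodule.smul_le_right ha
      have ha0 : a = 0 := Submodule.disjoint_def.1 hLT_disj _ haL haT
      rw [ha0, zero_add] at hab
      rwa [← hab]
    rw [← hlt]
    exact Submodule.add_mem _ (Submodule.mem_sup_left hl) (Submodule.mem_sup_right htIT)
  · refine sup_le hLM₁ (le_trans ?_ hIM)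
    rw [hNI]
    exact Submodule.smul_mono le_rfl le_top


end WittNormalDecomp

/-- Let `R` be a `p`-complete local ring (with residue characteristic `p`)
and let `(M, M₁)` be a pair over `R` with `M` free of rank `h` over `W(R)`.  Then `(M, M₁)`
admits a normal decomposition: there exist free `W(R)`-submodules `L, T ⊆ M` with
`M = L ⊕ T` and `M₁ = L ⊕ I_R·T`. -/
theorem pair_normal_decomposition
    (p : ℕ) [Fact p.Prime] (R : Type*) [CommRing R] [IsLocalRing R]
    (hcomplete : IsAdicComplete (Ideal.span {(p : R)}) R)
    [CharP (IsLocalRing.ResidueField R) p]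
    (M : Type*) [AddCommGroup M] [Module (WittVector p R) M]
    [Module.Free (WittVector p R) M] [Module.Finite (WittVector p R) M]
    (h : ℕ) (hrank : Module.finrank (WittVector p R) M = h)
    (M₁ : Submodule (WittVector p R) M)
    (hIM : RingHom.ker (WittVector.constantCoeff : WittVector p R →+* R) •
        (⊤ : Submodule (WittVector p R) M) ≤ M₁)
    (hsummand : ∃ C : Submodule (WittVector p R)
        (M ⧸ (RingHom.ker (WittVector.constantCoeff : WittVector p R →+* R) •
          (⊤ : Submodule (WittVector p R) M))),
        IsCompl (M₁.map (RingHom.ker (WittVector.constantCoeff : WittVector p R →+* R) •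
          (⊤ : Submodule (WittVector p R) M)).mkQ) C) :
    ∃ L T : Submodule (WittVector p R) M,
      IsCompl L T ∧
      Module.Free (WittVector p R) L ∧
      Module.Free (WittVector p R) T ∧
      M₁ = L ⊔ (RingHom.ker (WittVector.constantCoeff : WittVector p R →+* R) • T) := by
  have hpR : (p : R) ∈ IsLocalRing.maximalIdeal R := by
    have h1 : IsLocalRing.residue R (p : R) = 0 := by
      rw [map_natCast]
      exact CharP.cast_eq_zero (IsLocalRing.ResidueField R) p
    exact Ideal.Quotient.eq_zero_iff_mem.1 h1
  haveI : IsLocalRing (WittVector p R) := WittNormalDecomp.isLocalRing_wittVector p hpR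
  have hIm : RingHom.ker (WittVector.constantCoeff : WittVector p R →+* R) ≤
      IsLocalRing.maximalIdeal (WittVector p R) := by
    intro a ha
    rw [IsLocalRing.mem_maximalIdeal, mem_nonunits_iff]
    intro hu
    have h2 := hu.map (WittVector.constantCoeff : WittVector p R →+* R)
    rw [RingHom.mem_ker] at ha
    rw [ha] at h2
    exact not_isUnit_zero h2
  obtain ⟨C, hC⟩ := hsummand
  exact WittNormalDecomp.normal_decomp_aux (WittVector p R) _ hIm M M₁ _ rfl hIM C hC
end
end

section
/- Let K₀ be a field, A a complete local ring that is a K₀-algebra, with maximal ideal m and residue field K = A/m, such that K is a finite separable field extension of K₀ (via the composite K₀ → A → K). Then the projection A → K admits a unique K₀-algebra section K → A. -/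
/-- Let `K₀` be a field, `A` a complete local ring that is a
`K₀`-algebra, with maximal ideal `m` and residue field `K = A/m`, such that `K` is a finite
separable field extension of `K₀` (via the composite `K₀ → A → K`).  Then the projection
`A → K` admits a unique `K₀`-algebra section `K → A`. -/
theorem complete_local_ring_unique_section
    (K₀ : Type*) [Field K₀] (A : Type*) [CommRing A] [IsLocalRing A] [Algebra K₀ A]
    (hcomplete : IsAdicComplete (IsLocalRing.maximalIdeal A) A)
    [FiniteDimensional K₀ (IsLocalRing.ResidueField A)]
    [Algebra.IsSeparable K₀ (IsLocalRing.ResidueField A)] :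
    ∃! s : IsLocalRing.ResidueField A →ₐ[K₀] A,
      ∀ x : IsLocalRing.ResidueField A, IsLocalRing.residue A (s x) = x := by
  classical
  set K := IsLocalRing.ResidueField A with hK
  haveI hhens : HenselianLocalRing A := by
    constructor
    intro f hf a₀ h₁ h₂
    exact HenselianRing.is_henselian f hf a₀ h₁
      (h₂.map (Ideal.Quotient.mk (IsLocalRing.maximalIdeal A)))
  haveI : IsScalarTower K₀ A K := IsScalarTower.of_algebraMap_eq fun _ => rfl
  -- primitive element
  obtain ⟨α, hα⟩ := Field.exists_primitive_element K₀ K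
  have hint : IsIntegral K₀ α := Algebra.IsIntegral.isIntegral α
  set p := minpoly K₀ α with hp
  have hp_monic : p.Monic := minpoly.monic hint
  have hsep : p.Separable := Algebra.IsSeparable.isSeparable K₀ α
  have haeval : Polynomial.aeval α p = 0 := minpoly.aeval K₀ α
  have hder : Polynomial.aeval α (Polynomial.derivative p) ≠ 0 :=
    hsep.aeval_derivative_ne_zero haeval
  -- lift p to A
  set g : Polynomial A := p.map (algebraMap K₀ A) with hg
  -- apply Henselian property
  have hTFAE := ((HenselianLocalRing.TFAE A).out 0 1).mp hhens
  have haeg : Polynomial.aeval α g = 0 := by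
    rw [hg, Polynomial.aeval_map_algebraMap, haeval]
  have hdeg : Polynomial.aeval α (Polynomial.derivative g) ≠ 0 := by
    rw [hg, Polynomial.derivative_map, Polynomial.aeval_map_algebraMap]
    exact hder
  obtain ⟨a, haroot, hares⟩ := hTFAE g (hp_monic.map _) α haeg hdeg
  have haev : Polynomial.aeval a p = 0 := by
    rw [Polynomial.aeval_def, Polynomial.eval₂_eq_eval_map]
    exact haroot
  -- the derivative of g at a is a unit
  have hunit : IsUnit (Polynomial.eval a (Polynomial.derivative g)) := by
    rw [← IsLocalRing.notMem_maximalIdeal, ← Ideal.Quotient.eq_zero_iff_mem]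
    intro h0
    apply hdeg
    have key : Polynomial.aeval (IsLocalRing.residue A a) (Polynomial.derivative g)
        = IsLocalRing.residue A (Polynomial.eval a (Polynomial.derivative g)) := by
      rw [Polynomial.aeval_def]
      exact Polynomial.eval₂_at_apply _ a
    rw [← hares, key]
    exact h0
  -- uniqueness of the root with given residue
  have root_unique : ∀ b : A, Polynomial.aeval b p = 0 →
      IsLocalRing.residue A b = α → b = a := by
    intro b hbev hbres
    have hbroot : Polynomial.eval b g = 0 := by
      rw [Polynomial.aeval_def, Polynomial.eval₂_eq_eval_map] at hbev
      exact hbev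
    obtain ⟨k, hk⟩ := g.binomExpansion a (b - a)
    rw [add_sub_cancel, hbroot, haroot.eq_zero, zero_add] at hk
    have hmem : b - a ∈ IsLocalRing.maximalIdeal A := by
      rw [← Ideal.Quotient.eq_zero_iff_mem, map_sub]
      show IsLocalRing.residue A b - IsLocalRing.residue A a = 0
      rw [hbres, hares, sub_self]
    have hu2 : IsUnit (Polynomial.eval a (Polynomial.derivative g) + k * (b - a)) := by
      rw [← IsLocalRing.notMem_maximalIdeal]
      intro hmem2
      have : Polynomial.eval a (Polynomial.derivative g) ∈ IsLocalRing.maximalIdeal A := by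
        have := Ideal.sub_mem _ hmem2 (Ideal.mul_mem_left _ k hmem)
        simpa using this
      exact (IsLocalRing.notMem_maximalIdeal.mpr hunit) this
    have : (b - a) * (Polynomial.eval a (Polynomial.derivative g) + k * (b - a)) = 0 := by
      ring_nf
      ring_nf at hk
      linear_combination -hk
    have hzero : b - a = 0 := by
      obtain ⟨u, hu⟩ := hu2
      have := congrArg (· * (↑u⁻¹ : A)) this
      simpa [← hu, mul_assoc] using this
    exact sub_eq_zero.mp hzero
  -- construct the section via AdjoinRoot
  have hα' : IntermediateField.adjoin K₀ {α} = ⊤ := hα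
  let ι : AdjoinRoot p ≃ₐ[K₀] K :=
    (IntermediateField.adjoinRootEquivAdjoin K₀ hint).trans
      ((IntermediateField.equivOfEq hα').trans IntermediateField.topEquiv)
  have hι : ι (AdjoinRoot.root p) = α := by
    show ((IntermediateField.topEquiv))
        ((IntermediateField.equivOfEq hα')
          ((IntermediateField.adjoinRootEquivAdjoin K₀ hint) (AdjoinRoot.root p))) = α
    rw [IntermediateField.adjoinRootEquivAdjoin_apply_root]
    rfl
  -- extensionality principle: homs from K are determined by value at α
  have ext_at_α : ∀ {B : Type _} [CommRing B] [Algebra K₀ B] (u v : K →ₐ[K₀] B),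
      u α = v α → u = v := by
    intro B _ _ u v huv
    have : u.comp ι.toAlgHom = v.comp ι.toAlgHom := by
      apply AdjoinRoot.algHom_ext
      simpa [hι] using huv
    ext x
    have := congrArg (fun w => w (ι.symm x)) this
    simpa using this
  let s : K →ₐ[K₀] A := (AdjoinRoot.liftAlgHom p (Algebra.ofId K₀ A) a haev).comp ι.symm.toAlgHom
  have hsα' : s α = a := by
    have : ι.symm α = AdjoinRoot.root p := by
      rw [← hι, AlgEquiv.symm_apply_apply]
    simp [s, this, AdjoinRoot.liftAlgHom_root]
    exact AdjoinRoot.liftAlgHom_root _ _ _ _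
  refine ⟨s, ?_, ?_⟩
  · -- s is a section
    intro x
    let r : A →ₐ[K₀] K := IsScalarTower.toAlgHom K₀ A K
    have : r.comp s = AlgHom.id K₀ K := by
      apply ext_at_α
      show IsLocalRing.residue A (s α) = α
      rw [hsα', hares]
    exact congrArg (fun w => w x) this
  · -- uniqueness
    intro t ht
    apply ext_at_α
    rw [hsα']
    apply root_unique
    · rw [Polynomial.aeval_algHom_apply, haeval, map_zero]
    · exact ht α
end
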